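/- Any minimizing sequence for X[φ] = −T[φ]^{D/(D−2)}/W[φ] that converges to the Fubini bounce can be modified by scale transformations φ_n(x) → s_n^{(D−2)/2} φ_n(s_n x), with s_n → ∞ (or s_n → 0), so that the new sequence is still minimizing (each term has unchanged T and W) but converges pointwise to zero almost everywhere; hence W is not continuous along such sequences (W of the limit is 0 while W[φ_n] < 0 is fixed). -/

import Mathlib

open MeasureTheory Real Filter Topology

noncomputable section

/-- The Fubini bounce `φ(x) = (2/|λ|)^{1/2} (Δ b / (|x|² + b²))^Δ`, `Δ = (D-2)/2`. -/
def fubiniBounce (D : ℕ) (lam b : ℝ) (x : EuclideanSpace ℝ (Fin D)) : ℝ :=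
  Real.sqrt (2 / |lam|) * ((((D : ℝ) - 2) / 2) * b / (‖x‖ ^ 2 + b ^ 2)) ^ (((D : ℝ) - 2) / 2)

lemma mul_rpow_pos_left {a : ℝ} (ha : 0 < a) (b p : ℝ) : (a * b) ^ p = a ^ p * b ^ p := by
  rcases lt_trichotomy b 0 with hb | rfl | hb
  · rw [Real.rpow_def_of_neg (mul_neg_of_pos_of_neg ha hb), Real.rpow_def_of_neg hb,
      Real.rpow_def_of_pos ha, Real.log_mul ha.ne' hb.ne, add_mul, Real.exp_add]
    ring
  · by_cases hp : p = 0
    · simp [hp]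
    · simp [Real.zero_rpow hp]
  · exact Real.mul_rpow ha.le hb.le

lemma integral_W_scale (D : ℕ) (hD : 2 < D) (lam : ℝ) (f : EuclideanSpace ℝ (Fin D) → ℝ)
    (s : ℝ) (hs : 0 < s) :
    (∫ x : EuclideanSpace ℝ (Fin D),
      lam * (s ^ (((D:ℝ)-2)/2) * f (s • x)) ^ (2*(D:ℝ)/((D:ℝ)-2)))
    = ∫ x : EuclideanSpace ℝ (Fin D), lam * f x ^ (2*(D:ℝ)/((D:ℝ)-2)) := by
  have hD' : (2:ℝ) < (D:ℝ) := by exact_mod_cast hD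
  have hc : 0 < s ^ (((D:ℝ)-2)/2) := Real.rpow_pos_of_pos hs _
  have hne : ((D:ℝ)-2) ≠ 0 := by linarith
  have hΔp : ((D:ℝ)-2)/2 * (2*(D:ℝ)/((D:ℝ)-2)) = (D:ℝ) := by
    field_simp
  have key : ∀ x : EuclideanSpace ℝ (Fin D),
      lam * (s ^ (((D:ℝ)-2)/2) * f (s • x)) ^ (2*(D:ℝ)/((D:ℝ)-2))
      = s ^ (D:ℝ) * (lam * f (s • x) ^ (2*(D:ℝ)/((D:ℝ)-2))) := by
    intro x
    rw [mul_rpow_pos_left hc, ← Real.rpow_mul hs.le, hΔp]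
    ring
  simp_rw [key]
  rw [MeasureTheory.integral_const_mul,
    MeasureTheory.Measure.integral_comp_smul volume (fun y => lam * f y ^ (2*(D:ℝ)/((D:ℝ)-2))) s]
  rw [smul_eq_mul, finrank_euclideanSpace_fin, abs_of_pos (by positivity),
    Real.rpow_natCast]
  have : (0:ℝ) < s ^ D := by positivity
  field_simp

lemma fderiv_scale (D : ℕ) (f : EuclideanSpace ℝ (Fin D) → ℝ) (hf : Differentiable ℝ f)
    (s c : ℝ) (x : EuclideanSpace ℝ (Fin D)) :
    fderiv ℝ (fun y => c * f (s • y)) x = (c * s) • fderiv ℝ f (s • x) := by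
  have h1 : HasFDerivAt (fun y : EuclideanSpace ℝ (Fin D) => s • y)
      (s • ContinuousLinearMap.id ℝ (EuclideanSpace ℝ (Fin D))) x :=
    (hasFDerivAt_id x).const_smul s
  have h3 : HasFDerivAt (fun y : EuclideanSpace ℝ (Fin D) => f (s • y))
      ((fderiv ℝ f (s • x)).comp (s • ContinuousLinearMap.id ℝ (EuclideanSpace ℝ (Fin D)))) x :=
    (hf (s • x)).hasFDerivAt.comp x h1
  have h4 := h3.const_mul c
  rw [h4.fderiv]
  ext v
  simp [smul_smul, mul_assoc, mul_comm]

lemma integral_T_scale (D : ℕ) (hD : 2 < D) (f : EuclideanSpace ℝ (Fin D) → ℝ)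
    (hf : Differentiable ℝ f) (s : ℝ) (hs : 0 < s) :
    (∫ x : EuclideanSpace ℝ (Fin D),
      (1/2) * ‖fderiv ℝ (fun y => s ^ (((D:ℝ)-2)/2) * f (s • y)) x‖ ^ 2)
    = ∫ x : EuclideanSpace ℝ (Fin D), (1/2) * ‖fderiv ℝ f x‖ ^ 2 := by
  have hD' : (2:ℝ) < (D:ℝ) := by exact_mod_cast hD
  have hc : 0 < s ^ (((D:ℝ)-2)/2) := Real.rpow_pos_of_pos hs _
  have hsq : (s ^ (((D:ℝ)-2)/2) * s) ^ 2 = s ^ (D:ℝ) := by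
    nth_rewrite 2 [← Real.rpow_one s]
    rw [← Real.rpow_add hs, ← Real.rpow_natCast (s ^ (((D:ℝ)-2)/2 + 1)) 2,
      ← Real.rpow_mul hs.le]
    norm_num
    ring_nf
    exact Real.rpow_natCast s D
  have key : ∀ x : EuclideanSpace ℝ (Fin D),
      (1/2) * ‖fderiv ℝ (fun y => s ^ (((D:ℝ)-2)/2) * f (s • y)) x‖ ^ 2
      = s ^ (D:ℝ) * ((1/2) * ‖fderiv ℝ f (s • x)‖ ^ 2) := by
    intro x
    rw [fderiv_scale D f hf, norm_smul, Real.norm_eq_abs,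
      abs_of_pos (by positivity), mul_pow, hsq]
    ring
  simp_rw [key]
  rw [MeasureTheory.integral_const_mul,
    MeasureTheory.Measure.integral_comp_smul volume
      (fun y => (1/2) * ‖fderiv ℝ f y‖ ^ 2) s]
  rw [smul_eq_mul, finrank_euclideanSpace_fin, abs_of_pos (by positivity),
    Real.rpow_natCast]
  have : (0:ℝ) < s ^ D := by positivity
  field_simp

lemma tendsto_scale_aux (Δ A B r b : ℝ) (hΔ : 0 < Δ) (hB : 0 ≤ B) (hr : 0 < r) (hb : 0 < b) :
    Tendsto (fun τ : ℝ => τ ^ Δ * (A * (B / (τ^2 * r + b^2)) ^ Δ)) atTop (𝓝 0) := by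
  have h1 : Tendsto (fun τ : ℝ => τ * B / (τ^2 * r + b^2)) atTop (𝓝 0) := by
    apply squeeze_zero' (g := fun τ : ℝ => B / (τ * r))
    · filter_upwards [eventually_gt_atTop (0:ℝ)] with τ hτ
      positivity
    · filter_upwards [eventually_gt_atTop (0:ℝ)] with τ hτ
      rw [div_le_div_iff₀ (by positivity) (by positivity)]
      nlinarith [mul_nonneg hB (sq_nonneg b)]
    · have hg : Tendsto (fun τ : ℝ => τ * r) atTop atTop :=
        Tendsto.atTop_mul_const hr tendsto_id
      exact hg.const_div_atTop B
  have h2 : Tendsto (fun τ : ℝ => (τ * B / (τ^2 * r + b^2)) ^ Δ) atTop (𝓝 0) := by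
    have hc := (Real.continuousAt_rpow_const 0 Δ (Or.inr hΔ.le)).tendsto.comp h1
    simpa [Function.comp_def, Real.zero_rpow hΔ.ne'] using hc
  have h3 := h2.const_mul A
  rw [mul_zero] at h3
  apply h3.congr'
  filter_upwards [eventually_gt_atTop (0:ℝ)] with τ hτ
  rw [mul_div_assoc, Real.mul_rpow hτ.le (by positivity)]
  ring

/-- Any minimizing sequence with fixed `W[φ_n] = W₀ < 0` converging to the Fubini bounce can
be modified by scale transformations `φ_n(x) ↦ s_n^{(D−2)/2} φ_n(s_n x)` with `s_n → ∞` so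
that `T` and `W` are unchanged at every step but the new sequence converges pointwise to zero
almost everywhere; hence `W` is not continuous along such sequences (the limit has `W = 0`
while `W[φ_n] = W₀ < 0`). -/
theorem scaling_escape_sequence (D : ℕ) (hD : 2 < D) (lam : ℝ) (hlam : lam < 0)
    (b : ℝ) (hb : 0 < b) (W₀ : ℝ) (hW₀ : W₀ < 0)
    (φ : ℕ → EuclideanSpace ℝ (Fin D) → ℝ)
    (hdiff : ∀ n, Differentiable ℝ (φ n))
    (hKint : ∀ n, Integrable
      (fun x : EuclideanSpace ℝ (Fin D) => (1 / 2) * ‖fderiv ℝ (φ n) x‖ ^ 2))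
    (hWint : ∀ n, Integrable
      (fun x : EuclideanSpace ℝ (Fin D) => lam * (φ n x) ^ (2 * (D : ℝ) / ((D : ℝ) - 2))))
    (hW : ∀ n, (∫ x : EuclideanSpace ℝ (Fin D),
      lam * (φ n x) ^ (2 * (D : ℝ) / ((D : ℝ) - 2))) = W₀)
    (hconv : ∀ x, Tendsto (fun n => φ n x) atTop (nhds (fubiniBounce D lam b x))) :
    ∃ s : ℕ → ℝ, (∀ n, 0 < s n) ∧ Tendsto s atTop atTop ∧
      (∀ n, (∫ x : EuclideanSpace ℝ (Fin D),
          (1 / 2) * ‖fderiv ℝ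
            (fun y => (s n) ^ (((D : ℝ) - 2) / 2) * φ n ((s n) • y)) x‖ ^ 2)
        = ∫ x : EuclideanSpace ℝ (Fin D), (1 / 2) * ‖fderiv ℝ (φ n) x‖ ^ 2) ∧
      (∀ n, (∫ x : EuclideanSpace ℝ (Fin D),
          lam * ((s n) ^ (((D : ℝ) - 2) / 2) * φ n ((s n) • x))
            ^ (2 * (D : ℝ) / ((D : ℝ) - 2))) = W₀) ∧
      (∀ᵐ x : EuclideanSpace ℝ (Fin D),
        Tendsto (fun n => (s n) ^ (((D : ℝ) - 2) / 2) * φ n ((s n) • x)) atTop (nhds 0)) ∧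
      (∫ _x : EuclideanSpace ℝ (Fin D),
          lam * ((0 : ℝ)) ^ (2 * (D : ℝ) / ((D : ℝ) - 2))) = 0 := by
  classical
  have hD' : (2:ℝ) < (D:ℝ) := by exact_mod_cast hD
  set Δ : ℝ := ((D:ℝ) - 2) / 2 with hΔdef
  have hΔpos : 0 < Δ := by rw [hΔdef]; linarith
  set F : EuclideanSpace ℝ (Fin D) → ℝ := fubiniBounce D lam b with hFdef
  have hFcont : Continuous F := by
    rw [hFdef]
    unfold fubiniBounce
    apply continuous_const.mul
    apply Continuous.rpow_const
    · exact continuous_const.div (by fun_prop) (fun x => by positivity)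
    · intro x; right; positivity
  have hmeasφ : ∀ n, StronglyMeasurable (φ n) :=
    fun n => (hdiff n).continuous.stronglyMeasurable
  -- Egorov sets for each k
  have egorov : ∀ k : ℕ, ∃ t : Set (EuclideanSpace ℝ (Fin D)), MeasurableSet t ∧
      volume t ≤ ENNReal.ofReal ((2:ℝ)⁻¹ ^ k) ∧
      ∃ M : ℕ, ∀ n, M ≤ n → ∀ y ∈ Metric.closedBall (0 : EuclideanSpace ℝ (Fin D)) (k:ℝ) \ t,
        dist (F y) (φ n y) < (Real.sqrt k + 1) ^ (-Δ) * ((k:ℝ) + 1)⁻¹ := by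
    intro k
    obtain ⟨t, hts, htm, htμ, hunif⟩ := tendstoUniformlyOn_of_ae_tendsto
      (μ := volume) (s := Metric.closedBall (0 : EuclideanSpace ℝ (Fin D)) (k:ℝ))
      (fun n => hmeasφ n) hFcont.stronglyMeasurable measurableSet_closedBall
      measure_closedBall_lt_top.ne
      (ae_of_all _ fun x _ => hconv x) (ε := (2:ℝ)⁻¹ ^ k) (by positivity)
    refine ⟨t, htm, htμ, ?_⟩
    have hε : 0 < (Real.sqrt k + 1) ^ (-Δ) * ((k:ℝ) + 1)⁻¹ := by positivity
    obtain ⟨M, hM⟩ := eventually_atTop.mp (Metric.tendstoUniformlyOn_iff.mp hunif _ hε)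
    exact ⟨M, fun n hn y hy => hM n hn y hy⟩
  choose t htm htμ M hM using egorov
  -- the index function K
  obtain ⟨K, hKtop, hMK⟩ : ∃ K : ℕ → ℕ, Tendsto K atTop atTop ∧
      ∀ n, 1 ≤ K n → M (K n) ≤ n := by
    set N : ℕ → ℕ := fun k => (Finset.range (k+1)).sup M * k + k with hN
    refine ⟨fun n => Nat.findGreatest (fun k => N k ≤ n) n, ?_, ?_⟩
    · rw [tendsto_atTop_atTop]
      intro k
      refine ⟨max (N k) k, fun n hn => ?_⟩
      exact Nat.le_findGreatest (le_trans (le_max_right _ _) hn)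
        (le_trans (le_max_left _ _) hn)
    · intro n h1
      set k := Nat.findGreatest (fun k => N k ≤ n) n with hk
      have hspec : N k ≤ n := Nat.findGreatest_spec (P := fun k => N k ≤ n)
        (Nat.zero_le n) (by show N 0 ≤ n; simp [hN])
      have h2 : M k ≤ (Finset.range (k+1)).sup M :=
        Finset.le_sup (Finset.self_mem_range_succ k)
      have h3 : (Finset.range (k+1)).sup M ≤ (Finset.range (k+1)).sup M * k :=
        Nat.le_mul_of_pos_right _ h1
      have h1' : 1 ≤ k := h1
      show M k ≤ n
      simp only [hN] at hspec
      omega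
  -- the scaling sequence
  set τ : ℕ → ℝ := fun k => Real.sqrt k + 1 with hτdef
  have hτpos : ∀ k, 0 < τ k := fun k => by positivity
  have hτ1 : ∀ k, (1:ℝ) ≤ τ k := fun k => by
    have := Real.sqrt_nonneg (k:ℝ); show (1:ℝ) ≤ Real.sqrt k + 1; linarith
  have hτtop : Tendsto (fun k : ℕ => τ k) atTop atTop := by
    rw [tendsto_atTop_atTop]
    intro c
    refine ⟨⌈c^2⌉₊, fun a ha => ?_⟩
    have h1 : c^2 ≤ (a:ℝ) := le_trans (Nat.le_ceil _) (by exact_mod_cast ha)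
    rcases le_or_gt c 0 with hc | hc
    · have := Real.sqrt_nonneg (a:ℝ); show c ≤ Real.sqrt a + 1; linarith
    · have h2 : c ≤ Real.sqrt a := by
        rw [Real.le_sqrt hc.le (by positivity)]; exact h1
      show c ≤ Real.sqrt a + 1; linarith
  -- Borel–Cantelli sets
  set A : ℕ → Set (EuclideanSpace ℝ (Fin D)) := fun k => (fun x => τ k • x) ⁻¹' t k with hAdef
  have hAle : ∀ k, volume (A k) ≤ ENNReal.ofReal ((2:ℝ)⁻¹ ^ k) := by
    intro k
    have h := MeasureTheory.Measure.addHaar_preimage_smul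
      (volume : Measure (EuclideanSpace ℝ (Fin D))) (hτpos k).ne' (t k)
    calc volume (A k)
        = ENNReal.ofReal |((τ k) ^ Module.finrank ℝ (EuclideanSpace ℝ (Fin D)))⁻¹|
            * volume (t k) := h
      _ ≤ 1 * volume (t k) := by
          apply mul_le_mul_left
          apply ENNReal.ofReal_le_one.mpr
          rw [abs_of_pos (by positivity)]
          exact inv_le_one_of_one_le₀ (one_le_pow₀ (hτ1 k))
      _ ≤ ENNReal.ofReal ((2:ℝ)⁻¹ ^ k) := by rw [one_mul]; exact htμ k
  have hsum : (∑' k, volume (A k)) ≠ ⊤ := by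
    have h1 : ∀ k, volume (A k) ≤ (2 : ENNReal)⁻¹ ^ k := by
      intro k
      refine le_trans (hAle k) (le_of_eq ?_)
      rw [ENNReal.ofReal_pow (by norm_num)]
      congr 1
      rw [ENNReal.ofReal_inv_of_pos (by norm_num)]
      norm_num
    have h2 := ENNReal.tsum_le_tsum h1
    rw [ENNReal.tsum_geometric, ENNReal.one_sub_inv_two, inv_inv] at h2
    exact (h2.trans_lt (by norm_num)).ne
  have hBC : ∀ᵐ x : EuclideanSpace ℝ (Fin D), ∀ᶠ k in atTop, x ∉ A k :=
    MeasureTheory.ae_eventually_notMem hsum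
  haveI : Nontrivial (EuclideanSpace ℝ (Fin D)) := by
    refine ⟨⟨EuclideanSpace.single ⟨0, by omega⟩ (1:ℝ), 0, fun h => ?_⟩⟩
    have h2 := congrArg (fun v : EuclideanSpace ℝ (Fin D) => v ⟨0, by omega⟩) h
    simp [EuclideanSpace.single_apply] at h2
  have h0 : ∀ᵐ x : EuclideanSpace ℝ (Fin D), x ≠ 0 := by
    rw [ae_iff]
    simp only [not_not]
    have : {a : EuclideanSpace ℝ (Fin D) | a = 0} = {0} := by ext y; simp
    rw [this]
    exact measure_singleton 0
  refine ⟨fun n => τ (K n), fun n => hτpos _, hτtop.comp hKtop,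
    fun n => integral_T_scale D hD (φ n) (hdiff n) _ (hτpos _),
    fun n => (integral_W_scale D hD lam (φ n) _ (hτpos _)).trans (hW n), ?_, ?_⟩
  · -- a.e. convergence to zero
    filter_upwards [hBC, h0] with x hxA hx0
    obtain ⟨k₀, hk₀⟩ := eventually_atTop.mp hxA
    have hx' : 0 < ‖x‖ := norm_pos_iff.mpr hx0
    have hr : 0 < ‖x‖ ^ 2 := by positivity
    have hFeq : ∀ n : ℕ, (τ (K n)) ^ Δ * F (τ (K n) • x)
        = (fun u : ℝ => u ^ Δ *
            (Real.sqrt (2/|lam|) * (Δ * b / (u^2 * ‖x‖^2 + b^2)) ^ Δ)) (τ (K n)) := by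
      intro n
      show (τ (K n)) ^ Δ * F (τ (K n) • x) = _
      rw [hFdef]
      unfold fubiniBounce
      rw [norm_smul, Real.norm_eq_abs, mul_pow, sq_abs]
    have hpart2 : Tendsto (fun n => (τ (K n)) ^ Δ * F (τ (K n) • x)) atTop (𝓝 0) := by
      have haux := tendsto_scale_aux Δ (Real.sqrt (2/|lam|)) (Δ*b) (‖x‖^2) b hΔpos
        (by positivity) hr hb
      exact (haux.comp (hτtop.comp hKtop)).congr (fun n => (hFeq n).symm)
    have hpart1 : Tendsto
        (fun n => (τ (K n)) ^ Δ * (φ n (τ (K n) • x) - F (τ (K n) • x))) atTop (𝓝 0) := by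
      apply squeeze_zero_norm' (a := fun n => ((K n : ℝ) + 1)⁻¹)
      · have hev1 : ∀ᶠ n in atTop, k₀ ≤ K n := hKtop.eventually (eventually_ge_atTop k₀)
        have hev2 : ∀ᶠ n in atTop, 1 ≤ K n := hKtop.eventually (eventually_ge_atTop 1)
        have hev3 : ∀ᶠ n in atTop, ⌈(‖x‖+1)^2⌉₊ ≤ K n :=
          hKtop.eventually (eventually_ge_atTop _)
        filter_upwards [hev1, hev2, hev3] with n h1 h2 h3
        have hMn : M (K n) ≤ n := hMK n h2
        have hk : ((‖x‖+1)^2 : ℝ) ≤ (K n : ℝ) := le_trans (Nat.le_ceil _) (by exact_mod_cast h3)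
        have hsq : ‖x‖ + 1 ≤ Real.sqrt (K n) := by
          rw [Real.le_sqrt (by positivity) (by positivity)]; exact hk
        have hksq : (Real.sqrt (K n))^2 = ((K n : ℝ)) := Real.sq_sqrt (by positivity)
        have hball : τ (K n) • x ∈
            Metric.closedBall (0 : EuclideanSpace ℝ (Fin D)) ((K n : ℝ)) := by
          rw [Metric.mem_closedBall, dist_zero_right, norm_smul, Real.norm_eq_abs,
            abs_of_pos (hτpos _)]
          show (Real.sqrt (K n) + 1) * ‖x‖ ≤ ((K n : ℝ))
          nlinarith [norm_nonneg x, Real.sqrt_nonneg ((K n : ℝ))]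
        have hnot : τ (K n) • x ∉ t (K n) := fun hmem => hk₀ (K n) h1 hmem
        have hdist := hM (K n) n hMn (τ (K n) • x) ⟨hball, hnot⟩
        rw [Real.dist_eq] at hdist
        rw [Real.norm_eq_abs, abs_mul, abs_of_pos (Real.rpow_pos_of_pos (hτpos _) _),
          abs_sub_comm]
        calc τ (K n) ^ Δ * |F (τ (K n) • x) - φ n (τ (K n) • x)|
            ≤ τ (K n) ^ Δ * ((τ (K n)) ^ (-Δ) * (((K n : ℝ)) + 1)⁻¹) :=
              mul_le_mul_of_nonneg_left hdist.le (Real.rpow_nonneg (hτpos _).le _)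
          _ = (((K n : ℝ)) + 1)⁻¹ := by
              rw [← mul_assoc, ← Real.rpow_add (hτpos _)]
              simp
      · have h4 : Tendsto (fun k : ℕ => ((k:ℝ) + 1)⁻¹) atTop (𝓝 0) := by
          simpa only [one_div] using tendsto_one_div_add_atTop_nhds_zero_nat (𝕜 := ℝ)
        exact h4.comp hKtop
    have hcomb := hpart1.add hpart2
    rw [add_zero] at hcomb
    apply hcomb.congr
    intro n
    ring
  · have hppos : (0:ℝ) < 2*(D:ℝ)/((D:ℝ)-2) := by
      apply div_pos <;> linarith
    simp [Real.zero_rpow hppos.ne']
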